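/- Let r and n be integers with 1 ≤ r ≤ n and r dividing n. If F_1, F_2, F_3 are graphs on a common vertex set of size n, each of which is the vertex-disjoint union of n/r copies of the complete graph K_r, then the simultaneous domination number of F_1, F_2, F_3 is at most ((2r−1)/r^2) · n. -/

import Mathlib

/-- The simultaneous domination number of factors `F 0, …, F (k-1)` on a common
finite vertex set: the minimum cardinality of a set `S` that is a dominating set
in every factor. -/
noncomputable def simDomNum {V : Type*} [Fintype V] {k : ℕ}
    (F : Fin k → SimpleGraph V) : ℕ :=
  sInf {m | ∃ S : Finset V, (∀ i, ∀ v ∉ S, ∃ u ∈ S, (F i).Adj v u) ∧ S.card = m}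

/-- `G` is the vertex-disjoint union of copies of `K_r`: the vertex set is
partitioned into blocks of size `r`, and two vertices are adjacent iff they are
distinct and lie in a common block. -/
def IsUnionCliques {V : Type*} [Fintype V] [DecidableEq V]
    (G : SimpleGraph V) (r : ℕ) : Prop :=
  ∃ P : Finpartition (Finset.univ : Finset V),
    (∀ b ∈ P.parts, b.card = r) ∧
    ∀ u v : V, G.Adj u v ↔ (u ≠ v ∧ ∃ b ∈ P.parts, u ∈ b ∧ v ∈ b)

/-- Bernoulli-type bound: `r - c ≤ r * ((r-1)/r)^c`. -/
private lemma bern_aux {r : ℝ} (c : ℕ) (hr : 1 ≤ r) :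
    r - c ≤ r * ((r - 1) / r) ^ c := by
  have hr0 : (0 : ℝ) < r := lt_of_lt_of_le one_pos hr
  have hinv : 1 / r ≤ 1 := by rw [div_le_one hr0]; exact hr
  have h : 1 + (c : ℝ) * (-(1 / r)) ≤ (1 + (-(1 / r))) ^ c :=
    one_add_mul_le_pow (by linarith) c
  have h2 : (1 : ℝ) + (-(1 / r)) = (r - 1) / r := by field_simp; ring
  rw [h2] at h
  have h3 := mul_le_mul_of_nonneg_left h (le_of_lt hr0)
  have h4 : r * (1 + (c : ℝ) * (-(1 / r))) = r - c := by field_simp; ring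
  linarith [h4 ▸ h3]

/-- `2 * ((r-1)/r)^r ≤ (r-1)/r` for natural `r ≥ 1`. -/
private lemma two_pow_aux {r : ℕ} (hr : 1 ≤ r) :
    2 * (((r : ℝ) - 1) / r) ^ r ≤ ((r : ℝ) - 1) / r := by
  obtain ⟨k, rfl⟩ : ∃ k, r = k + 1 := ⟨r - 1, (Nat.succ_pred_eq_of_pos hr).symm⟩
  rcases Nat.eq_zero_or_pos k with rfl | hk
  · norm_num
  · have hk0 : (0 : ℝ) < k := by exact_mod_cast hk
    set q : ℝ := (((k : ℝ) + 1) - 1) / ((k : ℝ) + 1) with hq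
    have hqk : q = (k : ℝ) / (k + 1) := by rw [hq, add_sub_cancel_right]
    have hqpos : 0 < q := by
      rw [hqk]; exact div_pos hk0 (by positivity)
    -- Bernoulli: 2 ≤ (1 + 1/k)^k
    have hb : (2 : ℝ) ≤ (1 + 1 / (k : ℝ)) ^ k := by
      have := one_add_mul_le_pow (a := 1 / (k : ℝ))
        (le_trans (by norm_num) (by positivity : (0:ℝ) ≤ 1 / (k:ℝ))) k
      have hkk : (k : ℝ) * (1 / (k : ℝ)) = 1 := by field_simp
      linarith [hkk ▸ this]
    have hinv : q * (1 + 1 / (k : ℝ)) = 1 := by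
      rw [hqk]; field_simp
    have hprod : q ^ k * (1 + 1 / (k : ℝ)) ^ k = 1 := by
      rw [← mul_pow, hinv, one_pow]
    have hqk2 : 2 * q ^ k ≤ 1 := by
      have hqkpos : 0 < q ^ k := pow_pos hqpos k
      nlinarith
    have : (((k : ℝ) + 1 : ℝ)) = ((k + 1 : ℕ) : ℝ) := by push_cast; ring
    have hgoal : 2 * q ^ (k + 1) ≤ q := by
      rw [pow_succ]
      nlinarith
    convert hgoal using 3 <;> push_cast <;> ring

theorem stmt11 {V : Type*} [Fintype V] [DecidableEq V] {r n : ℕ}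
    (hr : 1 ≤ r) (hrn : r ≤ n) (hdvd : r ∣ n) (hn : Fintype.card V = n)
    (F₁ F₂ F₃ : SimpleGraph V)
    (h1 : IsUnionCliques F₁ r) (h2 : IsUnionCliques F₂ r)
    (h3 : IsUnionCliques F₃ r) :
    (simDomNum ![F₁, F₂, F₃] : ℝ) ≤ ((2 * (r : ℝ) - 1) / (r : ℝ) ^ 2) * n := by
  classical
  obtain ⟨P₁, hc₁, ha₁⟩ := h1
  obtain ⟨P₂, hc₂, ha₂⟩ := h2
  obtain ⟨P₃, hc₃, ha₃⟩ := h3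
  set m := P₁.parts.card with hm
  have hrR : (1 : ℝ) ≤ r := by exact_mod_cast hr
  have hr0 : (0 : ℝ) < r := lt_of_lt_of_le one_pos hrR
  have hrne : (r : ℝ) ≠ 0 := ne_of_gt hr0
  -- n = m * r
  have hcard_parts : ∀ (Q : Finpartition (Finset.univ : Finset V)),
      (∀ b ∈ Q.parts, b.card = r) → n = Q.parts.card * r := by
    intro Q hQ
    rw [← hn, ← Finset.card_univ, ← Q.sum_card_parts,
      Finset.sum_congr rfl hQ, Finset.sum_const, smul_eq_mul]
  have hnm : n = m * r := hcard_parts P₁ hc₁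
  have hm₂ : P₂.parts.card = m :=
    Nat.eq_of_mul_eq_mul_right hr (by rw [← hcard_parts P₂ hc₂, hnm])
  have hm₃ : P₃.parts.card = m :=
    Nat.eq_of_mul_eq_mul_right hr (by rw [← hcard_parts P₃ hc₃, hnm])
  set q : ℝ := ((r : ℝ) - 1) / r with hqdef
  have hqnn : 0 ≤ q := div_nonneg (by linarith) (le_of_lt hr0)
  -- the transversal space
  set T := P₁.parts.pi (fun b => (b : Finset V)) with hT
  have hTcard : T.card = r ^ m := by
    rw [hT, Finset.card_pi, Finset.prod_congr rfl (fun b hb => hc₁ b hb),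
      Finset.prod_const]
  have hTne : T.Nonempty :=
    ⟨fun b hb => (P₁.nonempty_of_mem_parts hb).choose,
      Finset.mem_pi.mpr fun b hb => (P₁.nonempty_of_mem_parts hb).choose_spec⟩
  -- per-block counting bound
  have count_le : ∀ B : Finset V, B.card = r →
      ((T.filter (fun f => ∀ b hb, f b hb ∉ B)).card : ℝ) ≤ q ^ r * (r : ℝ) ^ m := by
    intro B hB
    have hsum : ∑ b ∈ P₁.parts, (b ∩ B).card = r := by
      have hbU : P₁.parts.biUnion (fun b => b ∩ B) = B := by
        ext x
        simp only [Finset.mem_biUnion, Finset.mem_inter]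
        constructor
        · rintro ⟨b, hb, _, hxB⟩; exact hxB
        · intro hxB
          obtain ⟨b, hb, hxb⟩ := P₁.exists_mem (Finset.mem_univ x)
          exact ⟨b, hb, hxb, hxB⟩
      have hdisj : ∀ b ∈ P₁.parts, ∀ b' ∈ P₁.parts, b ≠ b' →
          Disjoint (b ∩ B) (b' ∩ B) := fun b hb b' hb' hne =>
        (P₁.disjoint hb hb' hne).mono Finset.inter_subset_left
          Finset.inter_subset_left
      calc ∑ b ∈ P₁.parts, (b ∩ B).card
          = (P₁.parts.biUnion fun b => b ∩ B).card :=
            (Finset.card_biUnion hdisj).symm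
        _ = B.card := by rw [hbU]
        _ = r := hB
    have hfil : T.filter (fun f => ∀ b hb, f b hb ∉ B)
        = P₁.parts.pi (fun b => b \ B) := by
      ext f
      simp only [hT, Finset.mem_filter, Finset.mem_pi, Finset.mem_sdiff]
      constructor
      · rintro ⟨hf1, hf2⟩ b hb; exact ⟨hf1 b hb, hf2 b hb⟩
      · intro h; exact ⟨fun b hb => (h b hb).1, fun b hb => (h b hb).2⟩
    rw [hfil, Finset.card_pi]
    push_cast
    calc (∏ b ∈ P₁.parts, ((b \ B).card : ℝ))
        ≤ ∏ b ∈ P₁.parts, ((r : ℝ) * q ^ (b ∩ B).card) := by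
          apply Finset.prod_le_prod (fun b _ => by positivity)
          intro b hb
          have h1 : b \ B = b \ (b ∩ B) := by
            rw [Finset.sdiff_inter_self_left]
          have hle : (b ∩ B).card ≤ b.card :=
            Finset.card_le_card Finset.inter_subset_left
          have h2 : ((b \ B).card : ℝ) = (r : ℝ) - ((b ∩ B).card : ℝ) := by
            rw [h1, Finset.card_sdiff_of_subset Finset.inter_subset_left,
              Nat.cast_sub hle, hc₁ b hb]
          rw [h2, hqdef]
          exact bern_aux _ hrR
      _ = q ^ r * (r : ℝ) ^ m := by
          rw [Finset.prod_mul_distrib, Finset.prod_const,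
            Finset.prod_pow_eq_pow_sum, hsum, hm, mul_comm]
  -- double counting for the missed blocks of a partition Q
  have swap_le : ∀ (Q : Finpartition (Finset.univ : Finset V)),
      (∀ b ∈ Q.parts, b.card = r) →
      (∑ f ∈ T, ((Q.parts.filter (fun B => ∀ b hb, f b hb ∉ B)).card : ℝ))
        ≤ (m : ℝ) * (q ^ r * (r : ℝ) ^ m) := by
    intro Q hQ
    have step1 : (∑ f ∈ T, ((Q.parts.filter (fun B => ∀ b hb, f b hb ∉ B)).card : ℝ))
        = ∑ B ∈ Q.parts, ((T.filter (fun f => ∀ b hb, f b hb ∉ B)).card : ℝ) := by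
      simp only [← Finset.sum_boole]
      rw [Finset.sum_comm]
    rw [step1]
    have : ∑ B ∈ Q.parts, ((T.filter (fun f => ∀ b hb, f b hb ∉ B)).card : ℝ)
        ≤ ∑ _B ∈ Q.parts, (q ^ r * (r : ℝ) ^ m) :=
      Finset.sum_le_sum fun B hB => count_le B (hQ B hB)
    calc _ ≤ ∑ _B ∈ Q.parts, (q ^ r * (r : ℝ) ^ m) := this
      _ = (Q.parts.card : ℝ) * (q ^ r * (r : ℝ) ^ m) := by
          rw [Finset.sum_const, nsmul_eq_mul]
      _ ≤ (m : ℝ) * (q ^ r * (r : ℝ) ^ m) := by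
          have hQm : Q.parts.card = m :=
            Nat.eq_of_mul_eq_mul_right hr (by rw [← hcard_parts Q hQ, hnm])
          rw [hQm]
  -- find a good transversal
  have hEx : ∃ f ∈ T,
      ((P₂.parts.filter (fun B => ∀ b hb, f b hb ∉ B)).card : ℝ)
      + ((P₃.parts.filter (fun B => ∀ b hb, f b hb ∉ B)).card : ℝ)
      ≤ q * m := by
    apply Finset.exists_le_of_sum_le hTne
    rw [Finset.sum_add_distrib, Finset.sum_const, hTcard, nsmul_eq_mul]
    have h2 := swap_le P₂ hc₂
    have h3 := swap_le P₃ hc₃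
    have hpow := two_pow_aux hr
    have hrm : (0 : ℝ) ≤ (r : ℝ) ^ m := by positivity
    have hmn : (0 : ℝ) ≤ (m : ℝ) := Nat.cast_nonneg m
    have key : 2 * ((m : ℝ) * (q ^ r * (r : ℝ) ^ m)) ≤ ((r : ℝ) ^ m) * (q * m) := by
      have h' : 2 * q ^ r ≤ q := hqdef ▸ hpow
      have h'' := mul_le_mul_of_nonneg_right h' (mul_nonneg hmn hrm)
      nlinarith [h'']
    push_cast
    nlinarith
  obtain ⟨f, hfT, hfgood⟩ := hEx
  have hfmem : ∀ b (hb : b ∈ P₁.parts), f b hb ∈ b := Finset.mem_pi.mp hfT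
  -- a choice function
  have hV : Nonempty V := by
    rw [← Fintype.card_pos_iff, hn]; omega
  obtain ⟨v₀⟩ := hV
  set pick : Finset V → V := fun B => if h : B.Nonempty then h.choose else v₀ with hpick
  have hpick_mem : ∀ B : Finset V, B.Nonempty → pick B ∈ B := by
    intro B h
    rw [hpick]
    simp only [dif_pos h]
    exact h.choose_spec
  -- the simultaneous dominating set
  set Tv : Finset V := P₁.parts.attach.image (fun b => f b.1 b.2) with hTv
  set U₂ : Finset V := (P₂.parts.filter (fun B => ∀ b hb, f b hb ∉ B)).image pick with hU₂
  set U₃ : Finset V := (P₃.parts.filter (fun B => ∀ b hb, f b hb ∉ B)).image pick with hU₃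
  set S : Finset V := Tv ∪ U₂ ∪ U₃ with hS
  have hTvS : Tv ⊆ S := by
    rw [hS]; exact (Finset.subset_union_left).trans Finset.subset_union_left
  have hU₂S : U₂ ⊆ S := by
    rw [hS]; exact (Finset.subset_union_right).trans Finset.subset_union_left
  have hU₃S : U₃ ⊆ S := by
    rw [hS]; exact Finset.subset_union_right
  -- transversal images are in S
  have hfS : ∀ b (hb : b ∈ P₁.parts), f b hb ∈ S := by
    intro b hb
    apply hTvS
    rw [hTv]
    exact Finset.mem_image.mpr ⟨⟨b, hb⟩, Finset.mem_attach _ _, rfl⟩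
  -- generic domination argument
  have hgen : ∀ (Q : Finpartition (Finset.univ : Finset V)) (G : SimpleGraph V),
      (∀ u v : V, G.Adj u v ↔ (u ≠ v ∧ ∃ b ∈ Q.parts, u ∈ b ∧ v ∈ b)) →
      (∀ B ∈ Q.parts, (∀ b hb, f b hb ∉ B) → pick B ∈ S) →
      ∀ v ∉ S, ∃ u ∈ S, G.Adj v u := by
    intro Q G hadj hmissS v hv
    obtain ⟨B, hB, hvB⟩ := Q.exists_mem (Finset.mem_univ v)
    by_cases hmiss : ∀ b hb, f b hb ∉ B
    · have huS : pick B ∈ S := hmissS B hB hmiss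
      have huB : pick B ∈ B := hpick_mem B (Q.nonempty_of_mem_parts hB)
      refine ⟨pick B, huS, (hadj v (pick B)).mpr ⟨?_, B, hB, hvB, huB⟩⟩
      intro h
      exact hv (h ▸ huS)
    · push_neg at hmiss
      obtain ⟨b, hb, hfb⟩ := hmiss
      refine ⟨f b hb, hfS b hb, (hadj v (f b hb)).mpr ⟨?_, B, hB, hvB, hfb⟩⟩
      intro h
      exact hv (h ▸ hfS b hb)
  have hdom : ∀ i, ∀ v ∉ S, ∃ u ∈ S, ((![F₁, F₂, F₃]) i).Adj v u := by
    intro i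
    fin_cases i
    · exact hgen P₁ F₁ ha₁ (fun B hB hmiss => absurd (hfmem B hB) (hmiss B hB))
    · exact hgen P₂ F₂ ha₂ (fun B hB hmiss =>
        hU₂S (Finset.mem_image.mpr ⟨B, Finset.mem_filter.mpr ⟨hB, hmiss⟩, rfl⟩))
    · exact hgen P₃ F₃ ha₃ (fun B hB hmiss =>
        hU₃S (Finset.mem_image.mpr ⟨B, Finset.mem_filter.mpr ⟨hB, hmiss⟩, rfl⟩))
  -- cardinality bound
  have hScard : (S.card : ℝ) ≤ (m : ℝ) + q * m := by
    have h1 : S.card ≤ Tv.card + U₂.card + U₃.card := by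
      rw [hS]
      exact le_trans (Finset.card_union_le _ _)
        (Nat.add_le_add_right (Finset.card_union_le _ _) _)
    have hTvc : Tv.card ≤ m := by
      rw [hTv]
      exact le_trans Finset.card_image_le (le_of_eq Finset.card_attach)
    have hU₂c : U₂.card ≤ (P₂.parts.filter (fun B => ∀ b hb, f b hb ∉ B)).card :=
      Finset.card_image_le
    have hU₃c : U₃.card ≤ (P₃.parts.filter (fun B => ∀ b hb, f b hb ∉ B)).card :=
      Finset.card_image_le
    have h2 : (S.card : ℝ) ≤ (Tv.card : ℝ) + U₂.card + U₃.card := by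
      exact_mod_cast h1
    have h3 : (Tv.card : ℝ) ≤ m := by exact_mod_cast hTvc
    have h4 : (U₂.card : ℝ) ≤ _ := Nat.cast_le.mpr hU₂c
    have h5 : (U₃.card : ℝ) ≤ _ := Nat.cast_le.mpr hU₃c
    calc (S.card : ℝ) ≤ (Tv.card : ℝ) + U₂.card + U₃.card := h2
      _ ≤ (m : ℝ) + (((P₂.parts.filter (fun B => ∀ b hb, f b hb ∉ B)).card : ℝ)
            + ((P₃.parts.filter (fun B => ∀ b hb, f b hb ∉ B)).card : ℝ)) := by
          linarith
      _ ≤ (m : ℝ) + q * m := by linarith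
  -- conclude
  have hsInf : simDomNum ![F₁, F₂, F₃] ≤ S.card := Nat.sInf_le ⟨S, hdom, rfl⟩
  have hsInfR : (simDomNum ![F₁, F₂, F₃] : ℝ) ≤ (S.card : ℝ) := Nat.cast_le.mpr hsInf
  have hfinal : (m : ℝ) + q * m = ((2 * (r : ℝ) - 1) / (r : ℝ) ^ 2) * n := by
    rw [hnm, hqdef]
    push_cast
    field_simp
    ring
  linarith
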